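/- Let τ = log₃ 2 and C_n = n^{−τ}·Σ_{k=0}^n ca_k where ca is the Cantor set sequence. Then limsup_{n→∞} C_n = 1, attained along n = 3^k. -/

import Mathlib

open Filter

/-- The Cantor set sequence: `ca n = 1` if the base-3 expansion of `n` contains no
digit `1`, and `0` otherwise. -/
noncomputable def cantorSeq (n : ℕ) : ℕ := if 1 ∈ Nat.digits 3 n then 0 else 1

namespace CantorAux

noncomputable def τ : ℝ := Real.log 2 / Real.log 3

lemma τ_pos : 0 < τ := div_pos (Real.log_pos one_lt_two) (Real.log_pos (by norm_num))

lemma τ_lt_one : τ < 1 :=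
  (div_lt_one (Real.log_pos (by norm_num))).2 (Real.log_lt_log (by norm_num) (by norm_num))

lemma three_rpow_τ : (3:ℝ) ^ τ = 2 := by
  have h3 : Real.log 3 ≠ 0 := ne_of_gt (Real.log_pos (by norm_num))
  rw [τ, Real.rpow_def_of_pos (by norm_num), mul_comm, div_mul_cancel₀ _ h3,
    Real.exp_log (by norm_num)]

lemma pow3_rpow (k : ℕ) : ((3:ℝ)^k) ^ τ = 2^k := by
  rw [← Real.rpow_natCast (3:ℝ) k, ← Real.rpow_mul (by norm_num), mul_comm,
    Real.rpow_mul (by norm_num), three_rpow_τ, Real.rpow_natCast]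

lemma ca_zero : cantorSeq 0 = 1 := by simp [cantorSeq]

lemma ca_mul3 (q : ℕ) : cantorSeq (3*q) = cantorSeq q := by
  rcases Nat.eq_zero_or_pos q with rfl | hq
  · rfl
  unfold cantorSeq
  rw [Nat.digits_def' (by norm_num : 1 < 3) (by positivity)]
  simp [Nat.mul_mod_right, Nat.mul_div_cancel_left _ (by norm_num : 0 < 3)]

lemma ca_mul3_add1 (q : ℕ) : cantorSeq (3*q+1) = 0 := by
  unfold cantorSeq
  rw [Nat.digits_def' (by norm_num : 1 < 3) (by omega)]
  simp [Nat.add_mul_mod_self_left]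

lemma ca_mul3_add2 (q : ℕ) : cantorSeq (3*q+2) = cantorSeq q := by
  unfold cantorSeq
  rw [Nat.digits_def' (by norm_num : 1 < 3) (by omega)]
  have h1 : (3*q+2) % 3 = 2 := by omega
  have h2 : (3*q+2) / 3 = q := by omega
  rw [h1, h2]
  simp

lemma ca_mid : ∀ k : ℕ, ∀ j, 3^k ≤ j → j < 2*3^k → cantorSeq j = 0 := by
  intro k
  induction k with
  | zero =>
    intro j h1 h2
    interval_cases j
    exact ca_mul3_add1 0
  | succ k ih =>
    intro j h1 h2
    have hP : (3:ℕ)^(k+1) = 3 * 3^k := by rw [pow_succ]; ring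
    have hq1 : 3^k ≤ j/3 := by omega
    have hq2 : j/3 < 2*3^k := by omega
    have h0 := ih (j/3) hq1 hq2
    have hj : j = 3*(j/3) + j % 3 := by omega
    have hu : j % 3 < 3 := Nat.mod_lt _ (by norm_num)
    rcases Nat.lt_succ_iff_lt_or_eq.1 hu with hu | hu
    · rcases Nat.lt_succ_iff_lt_or_eq.1 hu with hu | hu
      · have : j % 3 = 0 := by omega
        rw [hj, this, Nat.add_zero, ca_mul3]; exact h0
      · rw [hj, hu, ca_mul3_add1]
    · rw [hj, hu, ca_mul3_add2]; exact h0

lemma ca_top : ∀ k : ℕ, ∀ s, s < 3^k → cantorSeq (2*3^k + s) = cantorSeq s := by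
  intro k
  induction k with
  | zero =>
    intro s hs
    interval_cases s
    simpa using ca_mul3_add2 0
  | succ k ih =>
    intro s hs
    have hP : (3:ℕ)^(k+1) = 3 * 3^k := by rw [pow_succ]; ring
    have ht : s/3 < 3^k := by omega
    have hkey : 2*3^(k+1) + s = 3*(2*3^k + s/3) + s % 3 := by omega
    have hs' : s = 3*(s/3) + s % 3 := by omega
    have hu : s % 3 < 3 := Nat.mod_lt _ (by norm_num)
    rcases Nat.lt_succ_iff_lt_or_eq.1 hu with hu | hu
    · rcases Nat.lt_succ_iff_lt_or_eq.1 hu with hu | hu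
      · have h0 : s % 3 = 0 := by omega
        rw [hkey, h0, Nat.add_zero, ca_mul3, ih _ ht]
        conv_rhs => rw [hs', h0, Nat.add_zero, ca_mul3]
      · rw [hkey, hu, ca_mul3_add1]
        conv_rhs => rw [hs', hu, ca_mul3_add1]
    · rw [hkey, hu, ca_mul3_add2, ih _ ht]
      conv_rhs => rw [hs', hu, ca_mul3_add2]

/-- Counting function. -/
noncomputable def F (m : ℕ) : ℕ := ∑ k ∈ Finset.range m, cantorSeq k

lemma F_add (a b : ℕ) : F (a+b) = F a + ∑ s ∈ Finset.range b, cantorSeq (a+s) := by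
  induction b with
  | zero => simp [F]
  | succ b ih =>
    rw [← Nat.add_assoc, F, Finset.sum_range_succ, ← F, ih, Finset.sum_range_succ]
    omega

lemma F_mid (k r : ℕ) (hr : r ≤ 3^k) : F (3^k + r) = F (3^k) := by
  rw [F_add]
  have : ∑ s ∈ Finset.range r, cantorSeq (3^k + s) = 0 := by
    apply Finset.sum_eq_zero
    intro s hs
    have hs' : s < r := Finset.mem_range.1 hs
    exact ca_mid k _ (Nat.le_add_right _ _) (by omega)
  rw [this, Nat.add_zero]

lemma F_top (k r : ℕ) (hr : r ≤ 3^k) : F (2*3^k + r) = F (3^k) + F r := by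
  rw [F_add]
  have h1 : F (2*3^k) = F (3^k) := by
    have : 2*3^k = 3^k + 3^k := by ring
    rw [this, F_mid k (3^k) le_rfl]
  have h2 : ∑ s ∈ Finset.range r, cantorSeq (2*3^k + s) = F r := by
    apply Finset.sum_congr rfl
    intro s hs
    have hs' : s < r := Finset.mem_range.1 hs
    exact ca_top k s (by omega)
  rw [h1, h2]

lemma F_pow (k : ℕ) : F (3^k) = 2^k := by
  induction k with
  | zero => simp [F, ca_zero]
  | succ k ih =>
    have h : (3:ℕ)^(k+1) = 2*3^k + 3^k := by rw [pow_succ]; ring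
    rw [h, F_top k (3^k) le_rfl, ih, pow_succ]
    ring

lemma key_ineq (A x : ℝ) (hA : 0 < A) (hx : 0 ≤ x) (hxA : x ≤ A) :
    A^τ + x^τ ≤ (2*A + x)^τ := by
  have conc := Real.concaveOn_rpow τ_pos.le τ_lt_one.le
  have h := conc.2 (Set.mem_Ici.2 hA.le) (Set.mem_Ici.2 hx)
    (by norm_num : (0:ℝ) ≤ 2/3) (by norm_num : (0:ℝ) ≤ 1/3) (by norm_num)
  simp only [smul_eq_mul] at h
  have h3 : (2*A+x)^τ = 2 * (2/3*A + 1/3*x)^τ := by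
    have he : (2*A+x) = 3 * (2/3*A + 1/3*x) := by ring
    rw [he, Real.mul_rpow (by norm_num) (by positivity), three_rpow_τ]
  have hxτ : x^τ ≤ A^τ := Real.rpow_le_rpow hx hxA τ_pos.le
  rw [h3]
  linarith

lemma F_le : ∀ m : ℕ, 1 ≤ m → (F m : ℝ) ≤ (m:ℝ) ^ τ := by
  intro m
  induction m using Nat.strong_induction_on with
  | _ m ih =>
    intro hm
    set k := Nat.log 3 m with hk
    have h1 : 3^k ≤ m := Nat.pow_log_le_self 3 (by omega)
    have h2 : m < 3^(k+1) := Nat.lt_pow_succ_log_self (by norm_num) m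
    have hP : (3:ℕ)^(k+1) = 3 * 3^k := by rw [pow_succ]; ring
    have hcast : ((3^k : ℕ) : ℝ) = (3:ℝ)^k := by push_cast; ring
    have hApos : (0:ℝ) < (3:ℝ)^k := by positivity
    by_cases hc : m ≤ 2*3^k
    · have hr : m - 3^k ≤ 3^k := by omega
      have hmeq : m = 3^k + (m - 3^k) := by omega
      have hF : F m = 2^k := by rw [hmeq, F_mid k _ hr, F_pow]
      rw [hF]
      push_cast
      rw [← pow3_rpow]
      apply Real.rpow_le_rpow hApos.le _ τ_pos.le
      rw [← hcast]
      exact_mod_cast h1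
    · set r := m - 2*3^k with hrdef
      have hr1 : 1 ≤ r := by omega
      have hr2 : r < 3^k := by omega
      have hmeq : m = 2*3^k + r := by omega
      have hF : F m = 2^k + F r := by rw [hmeq, F_top k r hr2.le, F_pow]
      have hihr : (F r : ℝ) ≤ (r:ℝ)^τ := ih r (by omega) hr1
      have hkey := key_ineq ((3:ℝ)^k) (r:ℝ) hApos (by positivity)
        (by rw [← hcast]; exact_mod_cast hr2.le)
      have h2k : (2:ℝ)^k = ((3:ℝ)^k)^τ := (pow3_rpow k).symm
      have hmcast : (m:ℝ) = 2*(3:ℝ)^k + (r:ℝ) := by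
        rw [hmeq]; push_cast; ring
      rw [hF, hmcast]
      push_cast
      calc (2:ℝ)^k + (F r : ℝ) ≤ ((3:ℝ)^k)^τ + (r:ℝ)^τ := by
            rw [h2k]
            linarith
        _ ≤ (2*(3:ℝ)^k + (r:ℝ))^τ := hkey

lemma part2 : ∀ k : ℕ, ((3 : ℝ) ^ k) ^ (-τ) *
    ∑ j ∈ Finset.range (3 ^ k + 1), (cantorSeq j : ℝ) = 1 := by
  intro k
  have hsum : ∑ j ∈ Finset.range (3^k+1), (cantorSeq j:ℝ) = ((F (3^k+1) : ℕ) : ℝ) := by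
    simp [F]
  have hF : F (3^k+1) = 2^k := by
    rw [F_mid k 1 (Nat.one_le_two_pow.trans (Nat.pow_le_pow_left (by norm_num) k)), F_pow]
  rw [hsum, hF, Real.rpow_neg (by positivity), pow3_rpow]
  push_cast
  rw [inv_mul_cancel₀ (by positivity)]

end CantorAux

open CantorAux in
/-- For `τ = log₃ 2` and `C n = n^(-τ) * ∑_{k=0}^n ca k`, the limit superior of `C n`
is `1`, attained along `n = 3^k`. -/
theorem cantor_limsup :
    Filter.limsup (fun n : ℕ =>
      (n : ℝ) ^ (-(Real.log 2 / Real.log 3)) *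
        ∑ k ∈ Finset.range (n + 1), (cantorSeq k : ℝ)) atTop = 1 ∧
    ∀ k : ℕ, ((3 : ℝ) ^ k) ^ (-(Real.log 2 / Real.log 3)) *
        ∑ j ∈ Finset.range (3 ^ k + 1), (cantorSeq j : ℝ) = 1 := by
  have hτ : -(Real.log 2 / Real.log 3) = -τ := rfl
  set C : ℕ → ℝ := fun n =>
    (n : ℝ) ^ (-τ) * ∑ k ∈ Finset.range (n + 1), (cantorSeq k : ℝ) with hC
  have hCF : ∀ n : ℕ, C n = (n:ℝ)^(-τ) * (F (n+1) : ℝ) := by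
    intro n; simp [hC, F]
  have hCnonneg : ∀ n, 0 ≤ C n := by
    intro n
    rw [hCF]
    positivity
  have hub : ∀ n : ℕ, 1 ≤ n → C n ≤ (((n:ℝ)+1)/n)^τ := by
    intro n hn
    have hn' : (0:ℝ) < n := by exact_mod_cast hn
    rw [hCF, Real.rpow_neg hn'.le, Real.div_rpow (by positivity) hn'.le,
      div_eq_inv_mul]
    apply mul_le_mul_of_nonneg_left _ (by positivity)
    have := F_le (n+1) (by omega)
    push_cast at this
    exact this
  have htends : Tendsto (fun n : ℕ => (((n:ℝ)+1)/n)^τ) atTop (nhds 1) := by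
    have h0 : Tendsto (fun n : ℕ => ((n:ℝ)+1)/n) atTop (nhds 1) := by
      have h1 : Tendsto (fun n : ℕ => 1 + ((n:ℝ))⁻¹) atTop (nhds 1) := by
        have h2 : Tendsto (fun n : ℕ => ((n:ℝ))⁻¹) atTop (nhds 0) :=
          tendsto_inv_atTop_zero.comp tendsto_natCast_atTop_atTop
        simpa using (tendsto_const_nhds : Tendsto (fun _ : ℕ => (1:ℝ)) atTop (nhds 1)).add h2
      apply h1.congr'
      filter_upwards [eventually_ge_atTop 1] with n hn
      have hn' : (0:ℝ) < n := by exact_mod_cast hn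
      field_simp
    have := h0.rpow_const (Or.inr τ_pos.le)
    simpa [Real.one_rpow] using this
  have hC3 : ∀ k : ℕ, C (3^k) = 1 := by
    intro k
    have h := part2 k
    rw [hCF]
    have hsum : ∑ j ∈ Finset.range (3^k+1), (cantorSeq j:ℝ) = ((F (3^k+1) : ℕ) : ℝ) := by
      simp [F]
    rw [hsum] at h
    rw [← h, Nat.cast_pow]
    norm_num
  have hbdd : IsBoundedUnder (· ≤ ·) atTop C := by
    refine ⟨(2:ℝ)^τ, ?_⟩
    rw [Filter.eventually_map]
    filter_upwards [eventually_ge_atTop 1] with n hn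
    have hn' : (0:ℝ) < n := by exact_mod_cast hn
    calc C n ≤ (((n:ℝ)+1)/n)^τ := hub n hn
      _ ≤ (2:ℝ)^τ := by
          apply Real.rpow_le_rpow (by positivity) _ τ_pos.le
          rw [div_le_iff₀ hn']
          have : (1:ℝ) ≤ n := by exact_mod_cast hn
          linarith
  have hfreq : ∃ᶠ n in atTop, (1:ℝ) ≤ C n := by
    rw [Filter.frequently_atTop]
    intro N
    refine ⟨3^N, ?_, (hC3 N).ge⟩
    calc N ≤ 2^N := Nat.le_of_lt (Nat.lt_two_pow_self (n := N))
      _ ≤ 3^N := Nat.pow_le_pow_left (by norm_num) N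
  have hcobdd : IsCoboundedUnder (· ≤ ·) atTop C := by
    apply Filter.IsBoundedUnder.isCoboundedUnder_le (u := C) (l := atTop)
    exact ⟨0, by rw [Filter.eventually_map]; filter_upwards with n using hCnonneg n⟩
  have hle : Filter.limsup C atTop ≤ 1 := by
    have h1 : Filter.limsup C atTop ≤
        Filter.limsup (fun n : ℕ => (((n:ℝ)+1)/n)^τ) atTop := by
      apply Filter.limsup_le_limsup _ hcobdd htends.isBoundedUnder_le
      filter_upwards [eventually_ge_atTop 1] with n hn using hub n hn
    rwa [htends.limsup_eq] at h1
  have hge : (1:ℝ) ≤ Filter.limsup C atTop :=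
    le_limsup_of_frequently_le hfreq hbdd
  constructor
  · rw [hτ]
    exact le_antisymm hle hge
  · intro k
    rw [hτ]
    exact part2 k
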